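/- (Proposition B.1, parameter bound.) Assume (A1): there is G > 0 such that for all θ ∈ ℝ^p and all data points z = (x, y), z' = (x', y') in ℝ^d × Y, ‖∇_θ L(θ; z) − ∇_θ L(θ; z')‖ ≤ G · ‖x − x'‖. Fix an initialization θ ∈ ℝ^p and step size η > 0. Let D_⋆ = {z₁, …, z_N} and D' = {z'₁, …, z'_M} be nonempty finite datasets with D_⋆ ∩ D' ≠ ∅, and define the one-step gradient descent iterates θ_⋆ = θ − η · (1/N) Σ_{i=1}^N ∇_θ L(θ; z_i) and θ' = θ − η · (1/M) Σ_{j=1}^M ∇_θ L(θ; z'_j). Then ‖θ_⋆ − θ'‖ ≤ η · G · (diam(D_⋆) + diam(D')). -/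

import Mathlib

/-- The diameter of a finite dataset `z : Fin N → ℝ^d × Y`: the maximum Euclidean
distance between the input components of two of its elements. -/
noncomputable def inputDiam {d N : ℕ} {Y : Type*} [NeZero N]
    (z : Fin N → EuclideanSpace ℝ (Fin d) × Y) : ℝ :=
  Finset.univ.sup' Finset.univ_nonempty fun p : Fin N × Fin N =>
    dist (z p.1).1 (z p.2).1

lemma avg_grad_bound {p d : ℕ} {Y : Type*} {N : ℕ} [NeZero N]
    (g : EuclideanSpace ℝ (Fin d) × Y → EuclideanSpace ℝ (Fin p))
    (G Dm : ℝ)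
    (z : Fin N → EuclideanSpace ℝ (Fin d) × Y) (i₀ : Fin N)
    (h : ∀ i, ‖g (z i) - g (z i₀)‖ ≤ G * dist (z i).1 (z i₀).1)
    (hd : ∀ i, G * dist (z i).1 (z i₀).1 ≤ G * Dm) :
    ‖(1 / (N : ℝ)) • ∑ i, g (z i) - g (z i₀)‖ ≤ G * Dm := by
  have hN : (N : ℝ) ≠ 0 := Nat.cast_ne_zero.mpr (NeZero.ne N)
  have key : (1 / (N : ℝ)) • ∑ i, g (z i) - g (z i₀)
      = (1 / (N : ℝ)) • ∑ i, (g (z i) - g (z i₀)) := by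
    rw [Finset.sum_sub_distrib, smul_sub, Finset.sum_const, Finset.card_univ,
      Fintype.card_fin, ← Nat.cast_smul_eq_nsmul ℝ, smul_smul]
    field_simp
    rw [one_smul]
  rw [key]
  calc ‖(1 / (N : ℝ)) • ∑ i, (g (z i) - g (z i₀))‖
      ≤ (1 / (N : ℝ)) * ∑ i, ‖g (z i) - g (z i₀)‖ := by
        rw [norm_smul]
        gcongr
        · simp
        · exact norm_sum_le _ _
    _ ≤ (1 / (N : ℝ)) * ∑ _i : Fin N, G * Dm := by
        gcongr with i hi
        exact (h i).trans (hd i)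
    _ = G * Dm := by
        rw [Finset.sum_const, Finset.card_univ, Fintype.card_fin, nsmul_eq_mul]
        field_simp

theorem norm_one_step_gd_sub_le
    {p d : ℕ} {Y : Type*}
    (L : EuclideanSpace ℝ (Fin p) → EuclideanSpace ℝ (Fin d) × Y → ℝ)
    (G : ℝ) (hG : 0 < G)
    (hLip : ∀ (θ : EuclideanSpace ℝ (Fin p)) (z z' : EuclideanSpace ℝ (Fin d) × Y),
      ‖gradient (fun t => L t z) θ - gradient (fun t => L t z') θ‖ ≤ G * ‖z.1 - z'.1‖)
    (θ : EuclideanSpace ℝ (Fin p)) (η : ℝ) (hη : 0 < η)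
    {N M : ℕ} [NeZero N] [NeZero M]
    (z : Fin N → EuclideanSpace ℝ (Fin d) × Y)
    (z' : Fin M → EuclideanSpace ℝ (Fin d) × Y)
    (hinter : ∃ i j, z i = z' j)
    (θstar θ' : EuclideanSpace ℝ (Fin p))
    (hθstar : θstar = θ - η • ((1 / (N : ℝ)) • ∑ i, gradient (fun t => L t (z i)) θ))
    (hθ' : θ' = θ - η • ((1 / (M : ℝ)) • ∑ j, gradient (fun t => L t (z' j)) θ)) :
    ‖θstar - θ'‖ ≤ η * G * (inputDiam z + inputDiam z') := by
  obtain ⟨i₀, j₀, hij⟩ := hinter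
  set g : EuclideanSpace ℝ (Fin d) × Y → EuclideanSpace ℝ (Fin p) :=
    fun w => gradient (fun t => L t w) θ with hg
  set A := (1 / (N : ℝ)) • ∑ i, g (z i) with hA
  set B := (1 / (M : ℝ)) • ∑ j, g (z' j) with hB
  have hdiff : θstar - θ' = η • (B - A) := by
    rw [hθstar, hθ']; rw [smul_sub]; abel
  have h1 : ‖A - g (z i₀)‖ ≤ G * inputDiam z := by
    apply avg_grad_bound
    · intro i
      rw [← dist_eq_norm] at *
      simpa [dist_eq_norm] using hLip θ (z i) (z i₀)
    · intro i
      apply mul_le_mul_of_nonneg_left _ hG.le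
      exact Finset.le_sup' (f := fun q : Fin N × Fin N => dist (z q.1).1 (z q.2).1)
        (Finset.mem_univ (i, i₀))
  have h2 : ‖B - g (z' j₀)‖ ≤ G * inputDiam z' := by
    apply avg_grad_bound
    · intro j
      simpa [dist_eq_norm] using hLip θ (z' j) (z' j₀)
    · intro j
      apply mul_le_mul_of_nonneg_left _ hG.le
      exact Finset.le_sup' (f := fun q : Fin M × Fin M => dist (z' q.1).1 (z' q.2).1)
        (Finset.mem_univ (j, j₀))
  have hBA : ‖B - A‖ ≤ G * inputDiam z + G * inputDiam z' := by
    have : B - A = (B - g (z' j₀)) - (A - g (z i₀)) := by rw [hij]; abel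
    rw [this]
    calc ‖(B - g (z' j₀)) - (A - g (z i₀))‖
        ≤ ‖B - g (z' j₀)‖ + ‖A - g (z i₀)‖ := norm_sub_le _ _
      _ ≤ G * inputDiam z' + G * inputDiam z := add_le_add h2 h1
      _ = G * inputDiam z + G * inputDiam z' := by ring
  rw [hdiff, norm_smul, Real.norm_eq_abs, abs_of_pos hη, mul_assoc, mul_add]
  exact mul_le_mul_of_nonneg_left hBA hη.le
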